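/- In the CHSH_n game where Alice's response to question A = 0 is fixed to X = 0, the maximum winning probability of any non-signaling strategy is 1 − 1/(2n), equal to the classical value of CHSH_n. -/

import Mathlib

/-- The probability of satisfying the CHSH_n predicate on question pair `(a,b)`:
accept iff `x ≠ y` when `a = b = n-1`, and iff `x = y` otherwise. -/
noncomputable def chshnPairProb (n : ℕ) (p : Fin n → Fin n → Bool → Bool → ℝ)
    (a b : Fin n) : ℝ :=
  if a.val = n - 1 ∧ b.val = n - 1 then
    ∑ x : Bool, ∑ y : Bool, (if x ≠ y then p a b x y else 0)
  else
    ∑ x : Bool, ∑ y : Bool, (if x = y then p a b x y else 0)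

/-- The winning probability in the CHSH_n game (questions `(a,a)` and `(a,a+1)`,
each with probability `1/(2n)`) for the strategy `p(x,y|a,b)`. -/
noncomputable def chshnWinProb (n : ℕ) [NeZero n]
    (p : Fin n → Fin n → Bool → Bool → ℝ) : ℝ :=
  (1 / (2 * n)) * ∑ a : Fin n, (chshnPairProb n p a a + chshnPairProb n p a (a + 1))

section helpers
variable {n : ℕ} (p : Fin n → Fin n → Bool → Bool → ℝ)

private lemma pairProb_ne (a b : Fin n) (h : ¬(a.val = n - 1 ∧ b.val = n - 1)) :
    chshnPairProb n p a b = p a b false false + p a b true true := by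
  simp [chshnPairProb, h, Fintype.sum_bool]; ring

private lemma pairProb_last (a b : Fin n) (h : a.val = n - 1 ∧ b.val = n - 1) :
    chshnPairProb n p a b = p a b false true + p a b true false := by
  simp [chshnPairProb, h, Fintype.sum_bool]; ring

private lemma key1 (a b : Fin n) (h : ¬(a.val = n - 1 ∧ b.val = n - 1))
    (hpos : ∀ x y, 0 ≤ p a b x y)
    (hsum : ∑ x : Bool, ∑ y : Bool, p a b x y = 1) :
    chshnPairProb n p a b ≤ 1 - ((∑ y : Bool, p a b false y) - (∑ x : Bool, p a b x false)) := by
  rw [pairProb_ne p a b h]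
  simp only [Fintype.sum_bool] at hsum ⊢
  have h1 := hpos true false
  have h2 := hpos false true
  linarith

private lemma key2 (a b : Fin n) (h : ¬(a.val = n - 1 ∧ b.val = n - 1))
    (hpos : ∀ x y, 0 ≤ p a b x y)
    (hsum : ∑ x : Bool, ∑ y : Bool, p a b x y = 1) :
    chshnPairProb n p a b ≤ 1 + ((∑ y : Bool, p a b false y) - (∑ x : Bool, p a b x false)) := by
  rw [pairProb_ne p a b h]
  simp only [Fintype.sum_bool] at hsum ⊢
  have h1 := hpos true false
  have h2 := hpos false true
  linarith

private lemma key3 (a b : Fin n) (h : a.val = n - 1 ∧ b.val = n - 1)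
    (hpos : ∀ x y, 0 ≤ p a b x y)
    (hsum : ∑ x : Bool, ∑ y : Bool, p a b x y = 1) :
    chshnPairProb n p a b ≤ 1 - ((∑ y : Bool, p a b false y) + (∑ x : Bool, p a b x false) - 1) := by
  rw [pairProb_last p a b h]
  simp only [Fintype.sum_bool] at hsum ⊢
  have h1 := hpos true true
  have h2 := hpos false false
  linarith

end helpers

open Fin.NatCast in
private lemma chshn_upper (n : ℕ) (hn : 2 ≤ n) [NeZero n]
    (p : Fin n → Fin n → Bool → Bool → ℝ)
    (hpos : ∀ a b x y, 0 ≤ p a b x y)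
    (hsum : ∀ a b, ∑ x : Bool, ∑ y : Bool, p a b x y = 1)
    (hA : ∀ a b b' x, ∑ y : Bool, p a b x y = ∑ y : Bool, p a b' x y)
    (hB : ∀ a a' b y, ∑ x : Bool, p a b x y = ∑ x : Bool, p a' b x y)
    (hfix : ∀ b, ∑ y : Bool, p 0 b false y = 1) :
    chshnWinProb n p ≤ 1 - 1 / (2 * n) := by
  have hv1 : (1 : Fin n).val = 1 := by
    rw [Fin.val_one', Nat.mod_eq_of_lt (by omega)]
  set A : Fin n → ℝ := fun a => ∑ y : Bool, p a a false y with hAdef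
  set B : Fin n → ℝ := fun b => ∑ x : Bool, p b b x false with hBdef
  have hAa : ∀ a b : Fin n, ∑ y : Bool, p a b false y = A a := fun a b => hA a b a false
  have hBb : ∀ a b : Fin n, ∑ x : Bool, p a b x false = B b := fun a b => hB a b b false
  have hA0 : A 0 = 1 := by rw [hAdef]; exact hfix 0
  set h : Fin n → ℝ := fun a =>
    if a.val = n - 1 then 3 - B a - B 0
    else if a.val = 0 then B a + B (a + 1)
    else 2 - B a + B (a + 1) with hhdef
  have hstep : ∀ a : Fin n, chshnPairProb n p a a + chshnPairProb n p a (a + 1) ≤ h a := by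
    intro a
    by_cases hlast : a.val = n - 1
    · have hb0 : a + 1 = 0 := by
        apply Fin.ext
        rw [Fin.val_add, hv1, hlast, Nat.sub_add_cancel (by omega : 1 ≤ n), Nat.mod_self,
          Fin.val_zero]
      have hne : ¬(a.val = n - 1 ∧ ((a + 1 : Fin n)).val = n - 1) := by
        rintro ⟨-, hc⟩
        rw [hb0, Fin.val_zero] at hc
        omega
      have t1 := key3 p a a ⟨hlast, hlast⟩ (hpos a a) (hsum a a)
      have t2 := key2 p a (a + 1) hne (hpos a (a + 1)) (hsum a (a + 1))
      rw [hAa, hBb] at t1 t2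
      rw [hb0] at t2
      simp only [hhdef]
      rw [if_pos hlast, hb0]
      linarith
    · by_cases h0 : a.val = 0
      · have ha0 : a = 0 := by apply Fin.ext; rw [h0, Fin.val_zero]
        have hA1 : A a = 1 := by rw [ha0]; exact hA0
        have t1 := key1 p a a (by tauto) (hpos a a) (hsum a a)
        have t2 := key1 p a (a + 1) (by tauto) (hpos a (a + 1)) (hsum a (a + 1))
        rw [hAa, hBb] at t1 t2
        simp only [hhdef]
        rw [if_neg hlast, if_pos h0]
        linarith
      · have t1 := key2 p a a (by tauto) (hpos a a) (hsum a a)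
        have t2 := key1 p a (a + 1) (by tauto) (hpos a (a + 1)) (hsum a (a + 1))
        rw [hAa, hBb] at t1 t2
        simp only [hhdef]
        rw [if_neg hlast, if_neg h0]
        linarith
  have hsumh : ∑ a : Fin n, h a = 2 * n - 1 := by
    obtain ⟨m, rfl⟩ : ∃ m, n = m + 2 := ⟨n - 2, by omega⟩
    set G : ℕ → ℝ := fun k => B (k : Fin (m + 2)) with hGdef
    have hG : ∀ a : Fin (m + 2), G a.val = B a := by
      intro a; simp [hGdef, Fin.cast_val_eq_self]
    have hG1 : ∀ a : Fin (m + 2), G (a.val + 1) = B (a + 1) := by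
      intro a; simp [hGdef, Nat.cast_add, Nat.cast_one, Fin.cast_val_eq_self]
    have hG0 : G 0 = B 0 := by simp [hGdef]
    have hn1 : m + 2 - 1 = m + 1 := rfl
    have hrange : ∑ a : Fin (m + 2), h a = ∑ k ∈ Finset.range (m + 2),
        (if k = m + 1 then 3 - G k - G 0 else if k = 0 then G k + G (k + 1)
         else 2 - G k + G (k + 1)) := by
      rw [← Fin.sum_univ_eq_sum_range]
      apply Finset.sum_congr rfl
      intro a _
      simp only [hhdef, hn1]
      by_cases hl : a.val = m + 1
      · rw [if_pos hl, if_pos hl, hG, hG0]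
      · rw [if_neg hl, if_neg hl]
        by_cases h0 : a.val = 0
        · rw [if_pos h0, if_pos h0, hG, hG1]
        · rw [if_neg h0, if_neg h0, hG, hG1]
    rw [hrange, Finset.sum_range_succ, if_pos rfl]
    have hmid : ∑ k ∈ Finset.range (m + 1),
        (if k = m + 1 then 3 - G k - G 0 else if k = 0 then G k + G (k + 1)
         else 2 - G k + G (k + 1))
        = ∑ k ∈ Finset.range (m + 1),
          ((2 + (G (k + 1) - G k)) + (if k = 0 then 2 * G 0 - 2 else 0)) := by
      apply Finset.sum_congr rfl
      intro k hk
      have hk' : k < m + 1 := Finset.mem_range.mp hk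
      have hkne : k ≠ m + 1 := by omega
      rcases eq_or_ne k 0 with h0 | h0
      · subst h0
        rw [if_neg hkne, if_pos rfl, if_pos rfl]
        ring
      · rw [if_neg hkne, if_neg h0, if_neg h0]
        ring
    rw [hmid, Finset.sum_add_distrib, Finset.sum_add_distrib, Finset.sum_range_sub G,
      Finset.sum_const, Finset.card_range,
      Finset.sum_ite_eq' (Finset.range (m + 1)) 0 (fun _ => 2 * G 0 - 2),
      if_pos (Finset.mem_range.mpr (Nat.succ_pos m))]
    push_cast
    ring
  have hle : ∑ a : Fin n, (chshnPairProb n p a a + chshnPairProb n p a (a + 1)) ≤ 2 * n - 1 := by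
    calc ∑ a : Fin n, (chshnPairProb n p a a + chshnPairProb n p a (a + 1))
        ≤ ∑ a : Fin n, h a := Finset.sum_le_sum fun a _ => hstep a
      _ = 2 * n - 1 := hsumh
  have hnpos : (0 : ℝ) < n := by
    have : 0 < n := Nat.pos_of_ne_zero (NeZero.ne n)
    exact_mod_cast this
  rw [chshnWinProb]
  have heq : (1 / (2 * (n : ℝ))) * (2 * n - 1) = 1 - 1 / (2 * n) := by
    field_simp
  calc (1 / (2 * (n : ℝ))) * ∑ a : Fin n, (chshnPairProb n p a a + chshnPairProb n p a (a + 1))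
      ≤ (1 / (2 * (n : ℝ))) * (2 * n - 1) :=
        mul_le_mul_of_nonneg_left hle (by positivity)
    _ = 1 - 1 / (2 * n) := heq

/-- In the CHSH_n game where Alice's response to question `A = 0` is fixed to
`X = 0`, the maximum winning probability of any non-signaling strategy is
`1 − 1/(2n)`, the classical value: every such strategy wins with probability
at most `1 − 1/(2n)`, and some such strategy achieves it. -/
theorem chshn_nonsignaling_fixed_response (n : ℕ) (hn : 2 ≤ n) [NeZero n] :
    (∀ p : Fin n → Fin n → Bool → Bool → ℝ,
      (∀ a b x y, 0 ≤ p a b x y) →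
      (∀ a b, ∑ x : Bool, ∑ y : Bool, p a b x y = 1) →
      (∀ a b b' x, ∑ y : Bool, p a b x y = ∑ y : Bool, p a b' x y) →
      (∀ a a' b y, ∑ x : Bool, p a b x y = ∑ x : Bool, p a' b x y) →
      (∀ b, ∑ y : Bool, p 0 b false y = 1) →
      chshnWinProb n p ≤ 1 - 1 / (2 * n)) ∧
    (∃ p : Fin n → Fin n → Bool → Bool → ℝ,
      (∀ a b x y, 0 ≤ p a b x y) ∧
      (∀ a b, ∑ x : Bool, ∑ y : Bool, p a b x y = 1) ∧
      (∀ a b b' x, ∑ y : Bool, p a b x y = ∑ y : Bool, p a b' x y) ∧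
      (∀ a a' b y, ∑ x : Bool, p a b x y = ∑ x : Bool, p a' b x y) ∧
      (∀ b, ∑ y : Bool, p 0 b false y = 1) ∧
      chshnWinProb n p = 1 - 1 / (2 * n)) := by
  constructor
  · intro p hpos hsum hA hB hfix
    exact chshn_upper n hn p hpos hsum hA hB hfix
  · refine ⟨fun _ _ x y => if x = false ∧ y = false then 1 else 0, ?_, ?_, ?_, ?_, ?_, ?_⟩
    · intro a b x y; dsimp only; split <;> norm_num
    · intro a b
      dsimp only
      rw [Fintype.sum_bool, Fintype.sum_bool, Fintype.sum_bool]
      norm_num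
    · intro a b b' x; rfl
    · intro a a' b y; rfl
    · intro b; simp [Fintype.sum_bool]
    · have hv1 : (1 : Fin n).val = 1 := by
        rw [Fin.val_one', Nat.mod_eq_of_lt (by omega)]
      have hw : ∀ a b : Fin n, chshnPairProb n (fun _ _ x y => if x = false ∧ y = false then (1:ℝ) else 0) a b
          = if a.val = n - 1 ∧ b.val = n - 1 then 0 else 1 := by
        intro a b
        by_cases hc : a.val = n - 1 ∧ b.val = n - 1
        · rw [pairProb_last _ a b hc]; simp [hc]
        · rw [pairProb_ne _ a b hc]; simp [hc]
      rw [chshnWinProb]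
      have hsum2 : ∑ a : Fin n, (chshnPairProb n (fun _ _ x y => if x = false ∧ y = false then (1:ℝ) else 0) a a
          + chshnPairProb n (fun _ _ x y => if x = false ∧ y = false then (1:ℝ) else 0) a (a + 1))
          = 2 * n - 1 := by
        have key : ∀ a : Fin n, (chshnPairProb n (fun _ _ x y => if x = false ∧ y = false then (1:ℝ) else 0) a a
          + chshnPairProb n (fun _ _ x y => if x = false ∧ y = false then (1:ℝ) else 0) a (a + 1))
          = 2 - (if a = (⟨n - 1, by omega⟩ : Fin n) then 1 else 0) := by
          intro a
          rw [hw, hw]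
          have h2 : ¬(a.val = n - 1 ∧ ((a + 1 : Fin n)).val = n - 1) := by
            rintro ⟨h1, hc⟩
            rw [Fin.val_add, hv1, h1, Nat.sub_add_cancel (by omega : 1 ≤ n), Nat.mod_self] at hc
            omega
          rw [if_neg h2]
          by_cases hl : a.val = n - 1
          · rw [if_pos ⟨hl, hl⟩, if_pos (show a = ⟨n - 1, by omega⟩ from Fin.ext hl)]
            ring
          · rw [if_neg (by tauto), if_neg (by rw [Fin.ext_iff]; exact hl)]
            ring
        rw [Finset.sum_congr rfl fun a _ => key a, Finset.sum_sub_distrib,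
          Finset.sum_const, Finset.card_univ, Fintype.card_fin,
          Finset.sum_ite_eq' Finset.univ (⟨n - 1, by omega⟩ : Fin n) (fun _ => (1:ℝ)),
          if_pos (Finset.mem_univ _)]
        ring
      rw [hsum2]
      have hnpos : (0 : ℝ) < n := by
        have : 0 < n := Nat.pos_of_ne_zero (NeZero.ne n)
        exact_mod_cast this
      field_simp
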